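/- For every positive integer r, ∑_{k=0}^{r−1} (−1)^k (π/2)^{2k} λ(2r−2k)/(2k)! = (−1)^{r−1} (π/2)^{2r}/(2·(2r−1)!), where λ(s) = ∑_{n=0}^∞ 1/(2n+1)^s. -/

import Mathlib

open PowerSeries Finset

lemma sum_range_split {M : Type*} [AddCommMonoid M] (f : ℕ → M) (n : ℕ) :
    ∑ i ∈ range (2 * n + 1), f i
      = ∑ i ∈ range (n + 1), f (2 * i) + ∑ i ∈ range n, f (2 * i + 1) := by
  induction n with
  | zero => simp
  | succ n ih =>
    have h : 2 * (n + 1) + 1 = (2 * n + 1) + 1 + 1 := by ring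
    rw [h, Finset.sum_range_succ, Finset.sum_range_succ, ih,
      Finset.sum_range_succ (fun i => f (2 * i)) (n + 1),
      Finset.sum_range_succ (fun i => f (2 * i)) n,
      Finset.sum_range_succ (fun i => f (2 * i + 1)) n]
    have e1 : 2 * n + 1 + 1 = 2 * (n + 1) := by ring
    rw [e1]
    abel

lemma qstar (r : ℕ) (hr : 0 < r) :
    ∑ k ∈ Finset.range r,
        ((16 : ℚ) ^ (r - k) - 4 ^ (r - k)) * bernoulli (2 * (r - k))
          / ((2 * k).factorial * (2 * (r - k)).factorial)
      = 1 / (2 * r - 1).factorial := by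
  classical
  set e := PowerSeries.exp ℚ with he
  set en := rescale (-1 : ℚ) e with hendef
  set a := rescale (2 : ℚ) e with hadef
  set a4 := rescale (4 : ℚ) e with ha4def
  set B4 := rescale (4 : ℚ) (bernoulliPowerSeries ℚ) with hB4
  set B2 := rescale (2 : ℚ) (bernoulliPowerSeries ℚ) with hB2
  set S : PowerSeries ℚ := B4 - B2 + X with hSdef
  set Ch : PowerSeries ℚ := (e + en) * C (1/2) with hChdef
  set Sh : PowerSeries ℚ := (e - en) * C (1/2) with hShdef
  -- basic relations
  have h1 : B4 * (a4 - 1) = 4 * X := by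
    have h := congrArg (rescale (4:ℚ)) (bernoulliPowerSeries_mul_exp_sub_one ℚ)
    simp only [map_mul, map_sub, map_one, rescale_X] at h
    rw [hB4, ha4def, he, h, ← map_ofNat (C (R := ℚ)) 4]
  have h2 : B2 * (a - 1) = 2 * X := by
    have h := congrArg (rescale (2:ℚ)) (bernoulliPowerSeries_mul_exp_sub_one ℚ)
    simp only [map_mul, map_sub, map_one, rescale_X] at h
    rw [hB2, hadef, he, h, ← map_ofNat (C (R := ℚ)) 2]
  have hee : e * e = a := by
    have h := PowerSeries.exp_mul_exp_eq_exp_add (1:ℚ) 1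
    norm_num [rescale_one] at h
    exact h
  have hene : en * e = 1 := by
    have h := PowerSeries.exp_mul_exp_eq_exp_add (-1:ℚ) 1
    norm_num [rescale_one] at h
    exact h
  have ha4 : a * a = a4 := by
    have h := PowerSeries.exp_mul_exp_eq_exp_add (2:ℚ) 2
    norm_num at h
    exact h
  have hhalf : (C (1/2 : ℚ)) * (C (2 : ℚ)) = 1 := by
    rw [← map_mul]; norm_num
  have hChe : Ch * (C 2 * e) = a + 1 := by
    calc Ch * (C 2 * e) = (e * e + en * e) * (C (1/2) * C 2) := by rw [hChdef]; ring
      _ = (a + 1) * 1 := by rw [hee, hene, hhalf]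
      _ = a + 1 := mul_one _
  have hShe : Sh * (C 2 * e) = a - 1 := by
    calc Sh * (C 2 * e) = (e * e - en * e) * (C (1/2) * C 2) := by rw [hShdef]; ring
      _ = (a - 1) * 1 := by rw [hee, hene, hhalf]
      _ = a - 1 := mul_one _
  -- nonvanishing
  have hC2 : (C 2 : PowerSeries ℚ) ≠ 0 := by
    intro h
    have := congrArg (constantCoeff (R := ℚ)) h
    simp at this
  have hexp : e ≠ 0 := by
    intro h
    have := congrArg (constantCoeff (R := ℚ)) h
    simp [he] at this
  have hcoeff1 : ∀ c : ℚ, coeff 1 (rescale c e - 1) = c := by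
    intro c
    simp [he, map_sub, coeff_rescale, coeff_exp, coeff_one]
  have ham1 : a - 1 ≠ 0 := by
    intro h
    have := congrArg (coeff 1) h
    rw [hadef, hcoeff1] at this
    simp at this
  have ha4m1 : a4 - 1 ≠ 0 := by
    intro h
    have := congrArg (coeff 1) h
    rw [ha4def, hcoeff1] at this
    simp at this
  have hM : (C 2 * e * ((a - 1) * (a4 - 1))) ≠ 0 :=
    mul_ne_zero (mul_ne_zero hC2 hexp) (mul_ne_zero ham1 ha4m1)
  -- the key identity
  have key : S * Ch = X * Sh := by
    apply mul_right_cancel₀ hM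
    have e1 : S * Ch * (C 2 * e * ((a - 1) * (a4 - 1)))
        = (Ch * (C 2 * e)) * (S * ((a - 1) * (a4 - 1))) := by ring
    have e2 : X * Sh * (C 2 * e * ((a - 1) * (a4 - 1)))
        = (Sh * (C 2 * e)) * (X * ((a - 1) * (a4 - 1))) := by ring
    rw [e1, e2, hChe, hShe, hSdef]
    linear_combination ((a+1)*(a-1)) * h1 - ((a+1)*(a4-1)) * h2 + (4*(X:PowerSeries ℚ)) * ha4
  -- coefficients
  have hBcoeff : ∀ (c : ℚ) (n : ℕ),
      coeff n (rescale c (bernoulliPowerSeries ℚ)) = c ^ n * (bernoulli n / n.factorial) := by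
    intro c n
    simp [coeff_rescale, bernoulliPowerSeries, coeff_mk]
  have hSodd : ∀ j, coeff (2 * j + 1) S = 0 := by
    intro j
    rw [hSdef]
    simp only [map_add, map_sub, hB4, hB2, hBcoeff, coeff_X]
    rcases Nat.eq_zero_or_pos j with hj | hj
    · subst hj; norm_num
    · have hb : bernoulli (2 * j + 1) = 0 := by
        rw [bernoulli_eq_bernoulli'_of_ne_one (by omega)]
        exact bernoulli'_eq_zero_of_odd ⟨j, by ring⟩ (by omega)
      rw [hb]
      have : ¬ (2 * j + 1 = 1) := by omega
      simp [this]
      omega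
  have hSeven : ∀ j, coeff (2 * (j + 1)) S
      = ((16 : ℚ) ^ (j+1) - 4 ^ (j+1)) * bernoulli (2 * (j+1)) / (2 * (j+1)).factorial := by
    intro j
    rw [hSdef]
    simp only [map_add, map_sub, hB4, hB2, hBcoeff, coeff_X]
    have h16 : (4 : ℚ) ^ (2 * (j+1)) = 16 ^ (j+1) := by
      rw [pow_mul]; norm_num
    have h4 : (2 : ℚ) ^ (2 * (j+1)) = 4 ^ (j+1) := by
      rw [pow_mul]; norm_num
    have : ¬ (2 * (j + 1) = 1) := by omega
    rw [h16, h4]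
    simp only [this, if_false]
    ring
  have hS0 : coeff 0 S = 0 := by
    rw [hSdef]
    simp only [map_add, map_sub, hB4, hB2, hBcoeff, coeff_X]
    norm_num
  have hCheven : ∀ j, coeff (2 * j) Ch = 1 / (2 * j).factorial := by
    intro j
    rw [hChdef, coeff_mul_C]
    simp only [map_add, hendef, coeff_rescale, coeff_exp, he]
    have : (-1 : ℚ) ^ (2 * j) = 1 := by
      rw [pow_mul]; norm_num
    rw [this]
    simp only [Algebra.algebraMap_self, RingHom.id_apply]
    ring
  have hShodd : coeff (2 * r - 1) Sh = 1 / (2 * r - 1).factorial := by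
    rw [hShdef, coeff_mul_C]
    simp only [map_sub, hendef, coeff_rescale, coeff_exp, he, Algebra.algebraMap_self,
      RingHom.id_apply]
    have hodd : (-1 : ℚ) ^ (2 * r - 1) = -1 := Odd.neg_one_pow ⟨r - 1, by omega⟩
    rw [hodd]
    ring
  -- extract coefficient 2r from key
  have hXr : coeff (R := ℚ) (2 * r) (X * Sh) = 1 / (2 * r - 1).factorial := by
    rw [show 2 * r = (2 * r - 1) + 1 by omega, coeff_succ_X_mul]
    rw [show 2 * r - 1 + 1 - 1 = 2 * r - 1 by omega]
    exact hShodd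
  have hco := congrArg (coeff (2 * r)) key
  rw [hXr, coeff_mul, Finset.Nat.sum_antidiagonal_eq_sum_range_succ_mk] at hco
  have hsplit := sum_range_split (fun i => coeff i S * coeff (2 * r - i) Ch) r
  rw [hsplit] at hco
  have hoddzero : ∑ i ∈ range r, coeff (2 * i + 1) S * coeff (2 * r - (2 * i + 1)) Ch = 0 :=
    Finset.sum_eq_zero fun i _ => by rw [hSodd]; ring
  rw [hoddzero, add_zero, Finset.sum_range_succ'] at hco
  rw [show coeff (2 * 0) S = 0 from hS0] at hco
  rw [zero_mul, add_zero] at hco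
  calc ∑ k ∈ Finset.range r,
        ((16 : ℚ) ^ (r - k) - 4 ^ (r - k)) * bernoulli (2 * (r - k))
          / ((2 * k).factorial * (2 * (r - k)).factorial)
      = ∑ k ∈ Finset.range r,
          coeff (2 * ((r - 1 - k) + 1)) S * coeff (2 * r - 2 * ((r - 1 - k) + 1)) Ch := by
        refine Finset.sum_congr rfl fun k hk => ?_
        rw [Finset.mem_range] at hk
        rw [show r - 1 - k + 1 = r - k by omega,
          show 2 * r - 2 * (r - k) = 2 * k by omega,
          show 2 * (r - k) = 2 * ((r - k - 1) + 1) by omega,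
          hSeven (r - k - 1), hCheven k,
          show r - k - 1 + 1 = r - k by omega]
        ring
    _ = ∑ i ∈ Finset.range r, coeff (2 * (i + 1)) S * coeff (2 * r - 2 * (i + 1)) Ch :=
        Finset.sum_range_reflect (fun i => coeff (2 * (i + 1)) S * coeff (2 * r - 2 * (i + 1)) Ch) r
    _ = 1 / (2 * r - 1).factorial := hco

open Real

/-- The Dirichlet lambda function at natural arguments, as a real series. -/
noncomputable def lambdaR (s : ℕ) : ℝ := ∑' n : ℕ, 1 / (2 * n + 1 : ℝ) ^ s

lemma lambdaR_val (m : ℕ) (hm : m ≠ 0) :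
    lambdaR (2 * m) = (1 - ((2 : ℝ) ^ (2 * m))⁻¹) *
      ((-1 : ℝ) ^ (m + 1) * (2 : ℝ) ^ (2 * m - 1) * π ^ (2 * m) *
        bernoulli (2 * m) / (2 * m).factorial) := by
  set Z : ℝ := (-1 : ℝ) ^ (m + 1) * (2 : ℝ) ^ (2 * m - 1) * π ^ (2 * m) *
        bernoulli (2 * m) / (2 * m).factorial with hZ
  have hz : HasSum (fun n : ℕ => 1 / (n : ℝ) ^ (2 * m)) Z := hasSum_zeta_nat hm
  have heq : (fun n : ℕ => ((2 : ℝ) ^ (2 * m))⁻¹ * (1 / (n : ℝ) ^ (2 * m)))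
      = fun n : ℕ => 1 / ((2 : ℝ) * n) ^ (2 * m) := by
    funext n
    rw [mul_pow, one_div, one_div, mul_inv, ← one_div, ← one_div, div_mul_div_comm, one_mul]
  have he : HasSum (fun n : ℕ => 1 / ((2 : ℝ) * n) ^ (2 * m)) (((2 : ℝ) ^ (2 * m))⁻¹ * Z) := by
    have := hz.mul_left ((2 : ℝ) ^ (2 * m))⁻¹
    rwa [heq] at this
  have hosum : Summable (fun n : ℕ => 1 / (2 * (n : ℝ) + 1) ^ (2 * m)) := by
    have hinj : Function.Injective (fun n : ℕ => 2 * n + 1) := by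
      intro a b hab
      have : 2 * a + 1 = 2 * b + 1 := hab
      omega
    have := hz.summable.comp_injective hinj
    refine this.congr fun n => ?_
    simp only [Function.comp_apply]
    push_cast
    ring
  have ho := hosum.hasSum
  have hall : HasSum (fun n : ℕ => 1 / (n : ℝ) ^ (2 * m))
      (((2 : ℝ) ^ (2 * m))⁻¹ * Z + lambdaR (2 * m)) := by
    refine HasSum.even_add_odd ?_ ?_
    · have hfe : (fun k : ℕ => 1 / ((2 * k : ℕ) : ℝ) ^ (2 * m))
          = fun k : ℕ => 1 / ((2 : ℝ) * k) ^ (2 * m) := by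
        funext k; push_cast; ring
      exact hfe ▸ he
    · have hlam : lambdaR (2 * m) = ∑' n : ℕ, 1 / (2 * (n : ℝ) + 1) ^ (2 * m) := rfl
      rw [hlam]
      have hfo : (fun k : ℕ => 1 / ((2 * k + 1 : ℕ) : ℝ) ^ (2 * m))
          = fun k : ℕ => 1 / (2 * (k : ℝ) + 1) ^ (2 * m) := by
        funext k; push_cast; ring
      exact hfo ▸ ho
  have := hz.unique hall
  have hlam : lambdaR (2 * m) = Z - ((2 : ℝ) ^ (2 * m))⁻¹ * Z := by linarith
  rw [hlam]
  ring

theorem stmt_16 (r : ℕ) (hr : 0 < r) :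
    ∑ k ∈ Finset.range r,
        (-1 : ℝ) ^ k * (π / 2) ^ (2 * k) * lambdaR (2 * r - 2 * k) / (Nat.factorial (2 * k))
      = (-1 : ℝ) ^ (r - 1) * (π / 2) ^ (2 * r) / (2 * (Nat.factorial (2 * r - 1))) := by
  have hstep : ∀ k ∈ Finset.range r,
      (-1 : ℝ) ^ k * (π / 2) ^ (2 * k) * lambdaR (2 * r - 2 * k) / (Nat.factorial (2 * k))
        = ((-1 : ℝ) ^ (r - 1) * (π / 2) ^ (2 * r) / 2) *
          (((16 : ℝ) ^ (r - k) - 4 ^ (r - k)) * (bernoulli (2 * (r - k)) : ℝ)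
            / ((2 * k).factorial * (2 * (r - k)).factorial)) := by
    intro k hk
    rw [Finset.mem_range] at hk
    obtain ⟨m, hm, hm1⟩ : ∃ m, r = k + m ∧ 0 < m := ⟨r - k, by omega, by omega⟩
    subst hm
    rw [show 2 * (k + m) - 2 * k = 2 * m by omega, lambdaR_val m (by omega),
      show k + m - k = m by omega]
    have hfk : ((2 * k).factorial : ℝ) ≠ 0 := by positivity
    have hfm : ((2 * m).factorial : ℝ) ≠ 0 := by positivity
    have h2m : (2 : ℝ) ^ (2 * m - 1) = 2 ^ (2 * m) / 2 := by
      rw [eq_div_iff (two_ne_zero)]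
      rw [← pow_succ, show 2 * m - 1 + 1 = 2 * m by omega]
    have hpi : (π : ℝ) ^ (2 * m) = (π / 2) ^ (2 * m) * 2 ^ (2 * m) := by
      rw [div_pow, div_mul_cancel₀]
      positivity
    have hsgn : (-1 : ℝ) ^ (k + m - 1) = (-1 : ℝ) ^ k * (-1 : ℝ) ^ (m + 1) := by
      rw [← pow_add, show k + (m + 1) = (k + m - 1) + 2 by omega, pow_add]
      norm_num
    have hsplit : ((π : ℝ) / 2) ^ (2 * (k + m)) = (π / 2) ^ (2 * k) * (π / 2) ^ (2 * m) := by
      rw [← pow_add]; ring_nf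
    have h16 : (16 : ℝ) ^ m = 2 ^ (2 * m) * 2 ^ (2 * m) := by
      rw [← pow_add, show 2 * m + 2 * m = 4 * m by ring, pow_mul]
      norm_num
    have h4 : (4 : ℝ) ^ m = 2 ^ (2 * m) := by
      rw [pow_mul]; norm_num
    have h2mne : (2 : ℝ) ^ (2 * m) ≠ 0 := by positivity
    rw [h2m, hpi, hsgn, hsplit, h16, h4]
    field_simp
  rw [Finset.sum_congr rfl hstep, ← Finset.mul_sum]
  have hq := qstar r hr
  have hqc := congrArg (Rat.cast : ℚ → ℝ) hq
  push_cast at hqc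
  rw [hqc]
  have hfact : ((2 * r - 1).factorial : ℝ) ≠ 0 := by positivity
  field_simp
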